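/- Let m ≥ 1 and let s : Fin m → ℕ satisfy s i ≥ 1 for all i; let Σ = ∑ᵢ s i, let k be a natural number with 0 < k < Σ, and set k′ = max(k, Σ − k). Consider the two negative magnitudes ν₀ = k and ν₁ = Σ − k. Then the following are equivalent: (i) there exist P ⊆ Fin m and Q ⊆ {0,1} with (P, Q) ≠ (Fin m, {0,1}) such that ∑_{i∈P} s i = ∑_{j∈Q} ν_j and ∑_{i∈P} s i ≥ k′; (ii) there exists T ⊆ Fin m with ∑_{i∈T} s i = k. -/

import Mathlib

/-- Combinatorial core of the NP-hardness of verifying minimality of an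
at-least-`k`-charge set.  Positive charges are `s i` for `i : Fin m` and the two negative
charges have magnitudes `ν₀ = k` and `ν₁ = Σ − k` where `Σ = ∑ i, s i`; with
`k′ = max(k, Σ − k)`, the full collection admits a proper neutral sub-collection whose
positive charge sum is at least `k′` iff the subset-sum instance `(s, k)` is solvable. -/
theorem minimal_verification_subsetSum (m : ℕ) (hm : 1 ≤ m) (s : Fin m → ℕ)
    (hs : ∀ i, 1 ≤ s i) (k : ℕ) (hk : 0 < k) (hkS : k < ∑ i, s i) :
    (∃ (P : Finset (Fin m)) (Q : Finset (Fin 2)),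
        ¬(P = Finset.univ ∧ Q = Finset.univ) ∧
        ∑ i ∈ P, s i = ∑ j ∈ Q, ![k, (∑ i, s i) - k] j ∧
        max k ((∑ i, s i) - k) ≤ ∑ i ∈ P, s i) ↔
      ∃ T : Finset (Fin m), ∑ i ∈ T, s i = k := by
  constructor
  · rintro ⟨P, Q, hne, hsum, hge⟩
    have hle : ∑ i ∈ P, s i ≤ ∑ i, s i :=
      Finset.sum_le_sum_of_subset (Finset.subset_univ P)
    have hQcases : Q = ∅ ∨ Q = {0} ∨ Q = {1} ∨ Q = Finset.univ := by
      have : ∀ Q : Finset (Fin 2), Q = ∅ ∨ Q = {0} ∨ Q = {1} ∨ Q = Finset.univ := by decide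
      exact this Q
    rcases hQcases with h | h | h | h
    · subst h; simp only [Finset.sum_empty] at hsum; omega
    · subst h
      simp only [Finset.sum_singleton, Matrix.cons_val_zero] at hsum
      exact ⟨P, hsum⟩
    · subst h
      simp only [Finset.sum_singleton, Matrix.cons_val_one, Matrix.head_cons, Matrix.cons_val_zero] at hsum
      refine ⟨Pᶜ, ?_⟩
      have hc : ∑ i ∈ P, s i + ∑ i ∈ Pᶜ, s i = ∑ i, s i := Finset.sum_add_sum_compl P s
      omega
    · subst h
      have hsum' : ∑ i ∈ P, s i = ∑ i, s i := by
        rw [Fin.sum_univ_two] at hsum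
        simp at hsum
        omega
      have hP : P = Finset.univ := by
        by_contra hP
        obtain ⟨i, hi⟩ : ∃ i, i ∉ P := by
          by_contra hcon
          push_neg at hcon
          exact hP (Finset.eq_univ_iff_forall.mpr hcon)
        have h1 : ∑ j ∈ insert i P, s j ≤ ∑ i, s i :=
          Finset.sum_le_sum_of_subset (Finset.subset_univ _)
        rw [Finset.sum_insert hi] at h1
        have := hs i
        omega
      exact absurd ⟨hP, rfl⟩ hne
  · rintro ⟨T, hT⟩
    have hc : ∑ i ∈ T, s i + ∑ i ∈ Tᶜ, s i = ∑ i, s i := Finset.sum_add_sum_compl T s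
    by_cases h : ∑ i, s i - k ≤ k
    · refine ⟨T, {0}, ?_, ?_, ?_⟩
      · rintro ⟨_, hQ⟩
        exact absurd hQ (by decide)
      · simp [hT]
      · simp [hT]; omega
    · refine ⟨Tᶜ, {1}, ?_, ?_, ?_⟩
      · rintro ⟨_, hQ⟩
        exact absurd hQ (by decide)
      · simp; omega
      · simp; omega
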